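/- The Gauss sums G₊ = Σ_{k=0}^{N−1} (−1)^k t^{k²} and G₋ = Σ_{k=0}^{N−1} (−1)^k t^{−k²} satisfy G₊·G₋ = N. -/

import Mathlib

open Finset

noncomputable section

/-- `t = exp(πi/N)`, a primitive `2N`-th root of unity. -/
def tq (N : ℕ) : ℂ := Complex.exp ((Real.pi : ℂ) * Complex.I / N)

lemma shift_one_periodic {g : ℕ → ℂ} {N : ℕ} (hg : ∀ j, g (j + N) = g j) :
    ∑ j ∈ Finset.range N, g (j + 1) = ∑ j ∈ Finset.range N, g j := by
  have h1 : ∑ j ∈ Finset.range (N + 1), g j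
      = (∑ j ∈ Finset.range N, g (j + 1)) + g 0 := Finset.sum_range_succ' g N
  have h2 : ∑ j ∈ Finset.range (N + 1), g j
      = (∑ j ∈ Finset.range N, g j) + g N := Finset.sum_range_succ g N
  have h3 : g N = g 0 := by simpa using hg 0
  rw [h3] at h2
  exact add_right_cancel (h1.symm.trans h2)

lemma shift_sum_periodic {f : ℕ → ℂ} {N : ℕ} (hf : ∀ j, f (j + N) = f j) (k : ℕ) :
    ∑ j ∈ Finset.range N, f (j + k) = ∑ j ∈ Finset.range N, f j := by
  induction k with
  | zero => simp
  | succ k ih =>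
    have hg : ∀ j, (fun j => f (j + k)) (j + N) = (fun j => f (j + k)) j := by
      intro j
      simp only []
      rw [show j + N + k = j + k + N by ring, hf]
    have := shift_one_periodic (g := fun j => f (j + k)) hg
    calc ∑ j ∈ Finset.range N, f (j + (k + 1))
        = ∑ j ∈ Finset.range N, f (j + 1 + k) := by
          apply Finset.sum_congr rfl; intro j _; congr 1; ring
      _ = ∑ j ∈ Finset.range N, f (j + k) := this
      _ = ∑ j ∈ Finset.range N, f j := ih

/-- The Gauss sums `G₊ = Σ_{k=0}^{N−1} (−1)^k t^{k²}` and `G₋ = Σ_{k=0}^{N−1} (−1)^k t^{−k²}`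
satisfy `G₊·G₋ = N`. -/
theorem stmt_13 (N : ℕ) (hpos : 0 < N) (hN : Even N) :
    (∑ k ∈ Finset.range N, (-1 : ℂ) ^ k * tq N ^ (k ^ 2)) *
      (∑ k ∈ Finset.range N, (-1 : ℂ) ^ k * tq N ^ (-((k : ℤ) ^ 2)))
      = (N : ℂ) := by
  set t : ℂ := tq N with htdef
  have hNne : (N : ℂ) ≠ 0 := Nat.cast_ne_zero.mpr hpos.ne'
  have ht0 : t ≠ 0 := Complex.exp_ne_zero _
  have htN : t ^ N = -1 := by
    rw [htdef, tq, ← Complex.exp_nat_mul]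
    rw [show (N : ℂ) * ((Real.pi : ℂ) * Complex.I / N) = (Real.pi : ℂ) * Complex.I by
      field_simp]
    exact Complex.exp_pi_mul_I
  have ht2N : t ^ (2 * N) = 1 := by
    rw [mul_comm, pow_mul, htN]; norm_num
  have ht2Nz : t ^ ((2 * N : ℕ) : ℤ) = 1 := by rw [zpow_natCast, ht2N]
  have key : ∀ (x m : ℤ), t ^ (x + 2 * N * m) = t ^ x := by
    intro x m
    rw [zpow_add₀ ht0]
    have : t ^ ((2 : ℤ) * N * m) = (t ^ ((2 * N : ℕ) : ℤ)) ^ m := by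
      rw [← zpow_mul, show ((2 * N : ℕ) : ℤ) * m = (2 : ℤ) * N * m by push_cast; ring]
    rw [this, ht2Nz, one_zpow, mul_one]
  -- primitive root
  have hprim : IsPrimitiveRoot (t ^ 2) N := by
    have h := Complex.isPrimitiveRoot_exp N hpos.ne'
    have h2 : t ^ 2 = Complex.exp (2 * (Real.pi : ℂ) * Complex.I / N) := by
      rw [htdef, tq, ← Complex.exp_nat_mul]
      congr 1
      push_cast
      ring
    rw [h2]
    exact h
  set A : ℕ → ℂ := fun j => t ^ ((j : ℤ) ^ 2 + N * j) with hAdef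
  set B : ℕ → ℂ := fun k => t ^ ((N : ℤ) * k - (k : ℤ) ^ 2) with hBdef
  have hA : ∀ k : ℕ, (-1 : ℂ) ^ k * t ^ (k ^ 2) = A k := by
    intro k
    rw [hAdef]
    simp only []
    rw [← htN, ← pow_mul, ← pow_add]
    rw [show ((k : ℤ) ^ 2 + N * k) = ((N * k + k ^ 2 : ℕ) : ℤ) by push_cast; ring,
      zpow_natCast]
  have hB : ∀ k : ℕ, (-1 : ℂ) ^ k * t ^ (-((k : ℤ) ^ 2)) = B k := by
    intro k
    rw [hBdef]
    simp only []
    rw [← htN, ← pow_mul, ← zpow_natCast t (N * k), ← zpow_add₀ ht0]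
    all_goals (congr 1 <;> (push_cast; try ring))
  have hAper : ∀ j, A (j + N) = A j := by
    intro j
    rw [hAdef]
    simp only []
    rw [show (((j + N : ℕ) : ℤ) ^ 2 + (N : ℤ) * ((j + N : ℕ) : ℤ))
        = ((j : ℤ) ^ 2 + N * j) + 2 * N * (j + N) by push_cast; ring, key]
  have hmain : ∀ j k : ℕ, B k * A (j + k) = A j * ((t ^ 2) ^ j) ^ k := by
    intro j k
    have h1 : B k * A (j + k)
        = t ^ ((((j : ℤ) ^ 2 + N * j) + 2 * j * k) + 2 * N * k) := by
      rw [hAdef, hBdef]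
      simp only []
      rw [← zpow_add₀ ht0]
      congr 1
      push_cast
      ring
    have h2 : ((t ^ 2) ^ j) ^ k = t ^ ((2 * j * k : ℕ) : ℤ) := by
      rw [zpow_natCast, ← pow_mul, ← pow_mul]
      congr 1
      ring
    rw [h1, key, h2, hAdef]
    simp only []
    rw [← zpow_add₀ ht0]
    all_goals (congr 1 <;> (push_cast; try ring))
  calc (∑ k ∈ Finset.range N, (-1 : ℂ) ^ k * t ^ (k ^ 2)) *
      (∑ k ∈ Finset.range N, (-1 : ℂ) ^ k * t ^ (-((k : ℤ) ^ 2)))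
      = (∑ j ∈ Finset.range N, A j) * (∑ k ∈ Finset.range N, B k) := by
        rw [Finset.sum_congr rfl (fun k _ => hA k), Finset.sum_congr rfl (fun k _ => hB k)]
    _ = ∑ k ∈ Finset.range N, B k * (∑ j ∈ Finset.range N, A j) := by
        rw [mul_comm, Finset.sum_mul]
    _ = ∑ k ∈ Finset.range N, B k * (∑ j ∈ Finset.range N, A (j + k)) := by
        apply Finset.sum_congr rfl
        intro k _
        rw [shift_sum_periodic hAper k]
    _ = ∑ k ∈ Finset.range N, ∑ j ∈ Finset.range N, B k * A (j + k) := by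
        apply Finset.sum_congr rfl
        intro k _
        rw [Finset.mul_sum]
    _ = ∑ j ∈ Finset.range N, ∑ k ∈ Finset.range N, A j * ((t ^ 2) ^ j) ^ k := by
        rw [Finset.sum_comm]
        exact Finset.sum_congr rfl (fun j _ => Finset.sum_congr rfl (fun k _ => hmain j k))
    _ = ∑ j ∈ Finset.range N, A j * ∑ k ∈ Finset.range N, ((t ^ 2) ^ j) ^ k := by
        exact Finset.sum_congr rfl (fun j _ => (Finset.mul_sum _ _ _).symm)
    _ = (N : ℂ) := by
        rw [Finset.sum_eq_single_of_mem 0 (Finset.mem_range.mpr hpos)]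
        · simp [hAdef]
        · intro j hj hj0
          have hjlt := Finset.mem_range.mp hj
          have hne : (t ^ 2) ^ j ≠ 1 :=
            hprim.pow_ne_one_of_pos_of_lt hj0 hjlt
          rw [geom_sum_eq hne]
          have : ((t ^ 2) ^ j) ^ N = 1 := by
            rw [← pow_mul, mul_comm, pow_mul, hprim.pow_eq_one, one_pow]
          rw [this]
          simp
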